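/- arXiv:1007.5408 — 2 statements merged into one kernel-verified Lean document; each statement's English description precedes it below -/
import Mathlib

section
/- Let n ≥ 1, a ∈ ℝⁿ, α ∈ (0,1) and ᾱ = 1−α. Let z be a standard Gaussian random vector on ℝⁿ, X ∈ {−1,+1} independent of z with P(X=−1) = α, and y = X·a + z. Then the mutual information expression −E[log₂(α·e^{−‖y+a‖²/2} + ᾱ·e^{−‖y−a‖²/2})] − (n/2)·log₂(e) equals I(α, ‖a‖²); in particular, the binary-input vector-output additive Gaussian channel y = X·a + z is equivalent, in terms of mutual information, to a binary-input scalar additive Gaussian channel with SNR γ = ‖a‖², and the mutual information depends on a only through ‖a‖². -/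
open MeasureTheory ProbabilityTheory Real

/-- Binary entropy function (in bits). -/
noncomputable def binEnt (p : ℝ) : ℝ :=
  -(p * Real.logb 2 p) - (1 - p) * Real.logb 2 (1 - p)

/-- Squared Euclidean norm on `ℝⁿ`. -/
noncomputable def normSq {n : ℕ} (v : Fin n → ℝ) : ℝ := ∑ i, (v i) ^ 2

/-- The standard Gaussian measure on `ℝⁿ` (iid `N(0,1)` entries). -/
noncomputable def stdGaussian (n : ℕ) : Measure (Fin n → ℝ) :=
  Measure.pi fun _ => gaussianReal 0 1

/-- `I(α, γ)`: the mutual information of a binary-input scalar additive Gaussian channel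
with SNR `γ`, a priori input probabilities `α, 1-α`, and `Z ~ N(0,1)`. -/
noncomputable def Iscalar (α γ : ℝ) : ℝ :=
  binEnt α
    - α * ∫ z, Real.logb 2 (1 + ((1 - α) / α)
          * Real.exp (2 * Real.sqrt γ * z - 2 * γ)) ∂(gaussianReal 0 1)
    - (1 - α) * ∫ z, Real.logb 2 (1 + (α / (1 - α))
          * Real.exp (2 * Real.sqrt γ * z - 2 * γ)) ∂(gaussianReal 0 1)


open scoped NNReal ENNReal


lemma integral_gaussianReal_eq (μ : ℝ) {v : ℝ≥0} (hv : v ≠ 0) (f : ℝ → ℝ) :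
    ∫ x, f x ∂(gaussianReal μ v) = ∫ x, gaussianPDFReal μ v x * f x := by
  rw [gaussianReal_of_var_ne_zero μ hv, gaussianPDF_def]
  rw [show (fun x => ENNReal.ofReal (gaussianPDFReal μ v x))
      = fun x => ((gaussianPDFReal μ v x).toNNReal : ℝ≥0∞) from rfl]
  rw [integral_withDensity_eq_integral_smul
      ((measurable_gaussianPDFReal μ v).real_toNNReal) f]
  congr 1
  ext x
  rw [NNReal.smul_def, smul_eq_mul, Real.coe_toNNReal _ (gaussianPDFReal_nonneg μ v x)]

lemma integrable_gaussianReal_iff (μ : ℝ) {v : ℝ≥0} (hv : v ≠ 0) {g : ℝ → ℝ} :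
    Integrable g (gaussianReal μ v) ↔
      Integrable (fun x => gaussianPDFReal μ v x * g x) := by
  rw [gaussianReal_of_var_ne_zero μ hv, gaussianPDF_def]
  rw [show (fun x => ENNReal.ofReal (gaussianPDFReal μ v x))
      = fun x => ((gaussianPDFReal μ v x).toNNReal : ℝ≥0∞) from rfl]
  rw [integrable_withDensity_iff_integrable_smul
      ((measurable_gaussianPDFReal μ v).real_toNNReal)]
  constructor <;> intro h <;> refine h.congr (Filter.Eventually.of_forall fun x => ?_) <;>
    simp [NNReal.smul_def, Real.coe_toNNReal _ (gaussianPDFReal_nonneg μ v x)]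

lemma gaussianPDFReal_zero_one (x : ℝ) :
    gaussianPDFReal 0 1 x = (Real.sqrt (2 * π))⁻¹ * rexp (-(1/2) * x ^ 2) := by
  simp only [gaussianPDFReal, NNReal.coe_one, mul_one, sub_zero]
  rw [show -x ^ 2 / 2 = -(1/2) * x ^ 2 from by ring]

lemma integrable_abs_gaussian :
    Integrable (fun x : ℝ => |x|) (gaussianReal 0 1) := by
  rw [integrable_gaussianReal_iff 0 one_ne_zero]
  have h := (integrable_mul_exp_neg_mul_sq (b := 1/2) (by norm_num)).abs
  have h2 : Integrable (fun x : ℝ => (Real.sqrt (2 * π))⁻¹ * |x * rexp (-(1/2) * x ^ 2)|) :=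
    h.const_mul _
  refine h2.congr (Filter.Eventually.of_forall fun x => ?_)
  simp only [gaussianPDFReal_zero_one, abs_mul, abs_of_pos (exp_pos _)]
  ring

lemma rpow_two_eq (x : ℝ) : x ^ (2:ℝ) = x ^ 2 := by
  rw [show (2:ℝ) = ((2:ℕ):ℝ) by norm_num, Real.rpow_natCast]

lemma integrable_sq_gaussian :
    Integrable (fun x : ℝ => x ^ 2) (gaussianReal 0 1) := by
  rw [integrable_gaussianReal_iff 0 one_ne_zero]
  have h := integrable_rpow_mul_exp_neg_mul_sq (b := 1/2) (by norm_num) (s := 2) (by norm_num)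
  have h2 : Integrable (fun x : ℝ => (Real.sqrt (2 * π))⁻¹ * (x ^ (2:ℝ) * rexp (-(1/2) * x ^ 2))) :=
    h.const_mul _
  refine h2.congr (Filter.Eventually.of_forall fun x => ?_)
  simp only [gaussianPDFReal_zero_one, rpow_two_eq]
  ring

lemma integral_sq_exp : ∫ x : ℝ, x ^ 2 * rexp (-(1/2) * x ^ 2) = Real.sqrt (2 * π) := by
  have hG : Real.Gamma (3/2) = Real.sqrt π / 2 := by
    rw [show (3/2:ℝ) = 1/2 + 1 by norm_num, Real.Gamma_add_one (by norm_num),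
      Real.Gamma_one_half_eq]
    ring
  have hb : ((1/2:ℝ)) ^ (-(3:ℝ)/2 : ℝ) = 2 * Real.sqrt 2 := by
    rw [show ((1/2:ℝ)) = 2⁻¹ by norm_num, Real.inv_rpow (by norm_num : (0:ℝ) ≤ 2),
      show (-(3:ℝ)/2) = -(3/2) by ring, Real.rpow_neg (by norm_num : (0:ℝ) ≤ 2), inv_inv,
      show ((3:ℝ)/2) = 1 + 1/2 by norm_num, Real.rpow_add (by norm_num : (0:ℝ) < 2),
      Real.rpow_one, ← Real.sqrt_eq_rpow]
  have key := integral_rpow_mul_exp_neg_mul_rpow (p := 2) (q := 2) (b := 1/2)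
    (by norm_num) (by norm_num) (by norm_num)
  simp_rw [rpow_two_eq] at key
  have h := integral_comp_abs (f := fun t : ℝ => t ^ 2 * rexp (-(1/2) * t ^ 2))
  simp only [sq_abs] at h
  rw [h, key, show (-((2:ℝ)+1)/2) = -(3:ℝ)/2 by norm_num, hb,
    show ((2:ℝ)+1)/2 = 3/2 by norm_num, hG, Real.sqrt_mul (by norm_num : (0:ℝ) ≤ 2)]
  ring

lemma integral_sq_gaussian : ∫ x, x ^ 2 ∂(gaussianReal 0 1) = 1 := by
  rw [integral_gaussianReal_eq 0 one_ne_zero]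
  simp_rw [gaussianPDFReal_zero_one, mul_assoc,
    show ∀ x : ℝ, rexp (-(1/2) * x ^ 2) * x ^ 2 = x ^ 2 * rexp (-(1/2) * x ^ 2) from
      fun x => by ring]
  rw [integral_const_mul, integral_sq_exp, inv_mul_cancel₀ (by positivity)]


lemma conv_pdf {v₁ v₂ : ℝ≥0} (h₁ : v₁ ≠ 0) (h₂ : v₂ ≠ 0) (u x : ℝ) :
    gaussianPDFReal 0 v₁ x * gaussianPDFReal x v₂ u
      = gaussianPDFReal 0 (v₁ + v₂) u
        * gaussianPDFReal ((v₁ : ℝ) * u / ((v₁ : ℝ) + (v₂ : ℝ))) (v₁ * v₂ / (v₁ + v₂)) x := by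
  have hV1 : (0:ℝ) < v₁ := by positivity
  have hV2 : (0:ℝ) < v₂ := by positivity
  simp only [gaussianPDFReal, sub_zero, NNReal.coe_add, NNReal.coe_div, NNReal.coe_mul]
  rw [mul_mul_mul_comm, mul_mul_mul_comm ((Real.sqrt (2 * π * ((v₁:ℝ) + v₂)))⁻¹)]
  congr 1
  · rw [← mul_inv, ← mul_inv, ← Real.sqrt_mul (by positivity), ← Real.sqrt_mul (by positivity)]
    congr 2
    field_simp
  · rw [← Real.exp_add, ← Real.exp_add]
    congr 1
    field_simp
    ring

lemma gaussianReal_conv (v₁ v₂ : ℝ≥0) :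
    ((gaussianReal 0 v₁).prod (gaussianReal 0 v₂)).map (fun p : ℝ × ℝ => p.1 + p.2)
      = gaussianReal 0 (v₁ + v₂) := by
  by_cases h₁ : v₁ = 0
  · subst h₁
    rw [gaussianReal_zero_var, Measure.dirac_prod,
      Measure.map_map measurable_add measurable_prodMk_left,
      show ((fun p : ℝ × ℝ => p.1 + p.2) ∘ (Prod.mk (0:ℝ))) = id from
        funext fun y => by simp, Measure.map_id, zero_add]
  by_cases h₂ : v₂ = 0
  · subst h₂
    rw [gaussianReal_zero_var, Measure.prod_dirac,
      Measure.map_map measurable_add measurable_prodMk_right,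
      show ((fun p : ℝ × ℝ => p.1 + p.2) ∘ (fun x : ℝ => (x, (0:ℝ)))) = id from
        funext fun y => by simp, Measure.map_id, add_zero]
  have hv : v₁ + v₂ ≠ 0 := by simp [h₁]
  have hW : v₁ * v₂ / (v₁ + v₂) ≠ 0 := by simp [div_eq_zero_iff, h₁, h₂]
  have hjointR : Continuous fun q : ℝ × ℝ => gaussianPDFReal q.1 v₂ q.2 := by
    unfold gaussianPDFReal
    fun_prop
  have hjoint : Measurable fun q : ℝ × ℝ => gaussianPDF q.1 v₂ q.2 :=
    hjointR.measurable.ennreal_ofReal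
  ext s hs
  have hs' : MeasurableSet ((fun p : ℝ × ℝ => p.1 + p.2) ⁻¹' s) := measurable_add hs
  rw [Measure.map_apply measurable_add hs, Measure.prod_apply hs']
  have h3 : ∀ x : ℝ, gaussianReal 0 v₂ (Prod.mk x ⁻¹' ((fun p : ℝ × ℝ => p.1 + p.2) ⁻¹' s))
      = ∫⁻ u in s, gaussianPDF x v₂ u := by
    intro x
    have : (Prod.mk x ⁻¹' ((fun p : ℝ × ℝ => p.1 + p.2) ⁻¹' s)) = (fun y => x + y) ⁻¹' s := rfl
    rw [this, ← Measure.map_apply (measurable_const_add x) hs, gaussianReal_map_const_add,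
      zero_add, gaussianReal_apply _ h₂ s]
  simp_rw [h3]
  have hmeas : Measurable fun x : ℝ => ∫⁻ u in s, gaussianPDF x v₂ u :=
    Measurable.lintegral_prod_right' (f := fun q : ℝ × ℝ => gaussianPDF q.1 v₂ q.2) hjoint
  rw [gaussianReal_of_var_ne_zero 0 h₁,
    lintegral_withDensity_eq_lintegral_mul _ (measurable_gaussianPDF 0 v₁) hmeas]
  simp only [Pi.mul_apply]
  have hpull : ∀ x : ℝ, gaussianPDF 0 v₁ x * ∫⁻ u in s, gaussianPDF x v₂ u
      = ∫⁻ u in s, gaussianPDF 0 v₁ x * gaussianPDF x v₂ u :=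
    fun x => (lintegral_const_mul' _ _ ENNReal.ofReal_ne_top).symm
  simp_rw [hpull]
  rw [lintegral_lintegral_swap
    (((measurable_gaussianPDF 0 v₁).comp measurable_fst).mul hjoint).aemeasurable]
  have hinner : ∀ u : ℝ, (∫⁻ x, gaussianPDF 0 v₁ x * gaussianPDF x v₂ u)
      = gaussianPDF 0 (v₁ + v₂) u := by
    intro u
    simp_rw [gaussianPDF, ← ENNReal.ofReal_mul (gaussianPDFReal_nonneg 0 v₁ _)]
    have hint : Integrable (fun x => gaussianPDFReal 0 v₁ x * gaussianPDFReal x v₂ u) := by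
      have h := (integrable_gaussianPDFReal ((v₁:ℝ)*u/((v₁:ℝ)+(v₂:ℝ))) (v₁*v₂/(v₁+v₂))).const_mul
        (gaussianPDFReal 0 (v₁+v₂) u)
      refine h.congr (Filter.Eventually.of_forall fun x => ?_)
      exact (conv_pdf h₁ h₂ u x).symm
    rw [← ofReal_integral_eq_lintegral_ofReal hint
      (Filter.Eventually.of_forall fun x =>
        mul_nonneg (gaussianPDFReal_nonneg _ _ _) (gaussianPDFReal_nonneg _ _ _))]
    congr 1
    simp_rw [conv_pdf h₁ h₂ u]
    rw [integral_const_mul, integral_gaussianPDFReal_eq_one _ hW, mul_one]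
  simp_rw [hinner]
  exact (gaussianReal_apply _ hv s).symm


instance stdGaussian.instIsProbabilityMeasure (n : ℕ) :
    IsProbabilityMeasure (stdGaussian n) :=
  inferInstanceAs (IsProbabilityMeasure (Measure.pi _))

lemma measurable_linform {n : ℕ} (a : Fin n → ℝ) :
    Measurable (fun z : Fin n → ℝ => ∑ i, a i * z i) := by
  fun_prop

lemma map_linear : ∀ (n : ℕ) (a : Fin n → ℝ),
    (stdGaussian n).map (fun z => ∑ i, a i * z i)
      = gaussianReal 0 (Real.toNNReal (∑ i, (a i) ^ 2)) := by
  intro n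
  induction n with
  | zero =>
    intro a
    rw [_root_.stdGaussian, Measure.pi_of_empty, Measure.map_dirac' (measurable_linform a)]
    simp [gaussianReal_zero_var]
  | succ n ih =>
    intro a
    have hmp := measurePreserving_piFinSuccAbove (fun _ : Fin (n+1) => gaussianReal 0 1) 0
    set e := MeasurableEquiv.piFinSuccAbove (fun _ : Fin (n+1) => ℝ) 0 with he
    have h1 : (stdGaussian (n+1)).map (fun z => ∑ i, a i * z i)
        = (((gaussianReal 0 1).prod (stdGaussian n)).map
            (fun p : ℝ × (Fin n → ℝ) => a 0 * p.1 + ∑ j, a j.succ * p.2 j)) := by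
      simp only [_root_.stdGaussian]
      rw [← hmp.map_eq, Measure.map_map ?hm e.measurable]
      case hm =>
        fun_prop
      congr 1
      funext z
      rw [Function.comp_apply, Fin.sum_univ_succ, he]
      simp [MeasurableEquiv.piFinSuccAbove, Fin.succAbove_zero, Fin.tail]
    rw [h1,
      show (fun p : ℝ × (Fin n → ℝ) => a 0 * p.1 + ∑ j, a j.succ * p.2 j)
        = (fun q : ℝ × ℝ => q.1 + q.2)
          ∘ (Prod.map (fun x => a 0 * x) (fun w : Fin n → ℝ => ∑ j, a j.succ * w j)) from rfl,
      ← Measure.map_map measurable_add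
        ((measurable_const_mul (a 0)).prodMap (measurable_linform fun j => a j.succ)),
      ← Measure.map_prod_map _ _ (measurable_const_mul (a 0))
        (measurable_linform fun j => a j.succ),
      ih (fun j => a j.succ), gaussianReal_map_const_mul (a 0), mul_zero, gaussianReal_conv]
    congr 1
    ext
    push_cast
    rw [Real.coe_toNNReal _ (by positivity), Real.coe_toNNReal _ (by positivity),
      Fin.sum_univ_succ]
    ring

lemma eval_map (n : ℕ) (i : Fin n) :
    (stdGaussian n).map (fun z => z i) = gaussianReal 0 1 := by
  have hfe : (fun z : Fin n → ℝ => ∑ j, (if j = i then (1:ℝ) else 0) * z j)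
      = fun z => z i := by
    funext z
    simp [ite_mul, Finset.sum_ite_eq']
  have h := map_linear n (fun j => if j = i then (1:ℝ) else 0)
  rw [hfe] at h
  rw [h]
  norm_num [ite_pow, Finset.sum_ite_eq']

lemma integrable_coord_sq (n : ℕ) (i : Fin n) :
    Integrable (fun z : Fin n → ℝ => (z i) ^ 2) (stdGaussian n) := by
  have h := (integrable_map_measure
    (f := fun z : Fin n → ℝ => z i) (g := fun x : ℝ => x ^ 2)
    (by rw [eval_map]; exact (continuous_pow 2).aestronglyMeasurable)
    (measurable_pi_apply i).aemeasurable).mp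
  rw [eval_map] at h
  exact h integrable_sq_gaussian

lemma integrable_normSq (n : ℕ) :
    Integrable (fun z : Fin n → ℝ => normSq z) (stdGaussian n) := by
  simp only [normSq]
  exact integrable_finset_sum _ fun i _ => integrable_coord_sq n i

lemma integral_normSq (n : ℕ) :
    ∫ z, normSq z ∂(stdGaussian n) = n := by
  simp only [normSq]
  rw [integral_finset_sum _ fun i _ => integrable_coord_sq n i]
  have : ∀ i : Fin n, ∫ z, (z i) ^ 2 ∂(stdGaussian n) = 1 := by
    intro i
    have h2 := integral_map (μ := stdGaussian n) (f := fun x : ℝ => x ^ 2)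
      (measurable_pi_apply i).aemeasurable
      (by rw [eval_map]; exact (continuous_pow 2).aestronglyMeasurable)
    rw [eval_map, integral_sq_gaussian] at h2
    exact h2.symm
  simp [this]


lemma key_log {α : ℝ} (hα0 : 0 < α) (hα1 : α < 1) (A B : ℝ) :
    Real.logb 2 (α * rexp A + (1 - α) * rexp B)
      = A * (Real.log 2)⁻¹
        + (Real.logb 2 α + Real.logb 2 (1 + ((1 - α) / α) * rexp (B - A))) := by
  have hc : (0:ℝ) < (1 - α) / α := div_pos (by linarith) hα0
  have hpos : (0:ℝ) < 1 + ((1 - α) / α) * rexp (B - A) :=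
    add_pos_of_pos_of_nonneg one_pos (mul_pos hc (exp_pos _)).le
  have h1 : α * rexp A + (1 - α) * rexp B
      = rexp A * (α * (1 + ((1 - α) / α) * rexp (B - A))) := by
    rw [Real.exp_sub]
    field_simp
  rw [h1, Real.logb_mul (exp_ne_zero _) (by positivity),
    Real.logb_mul hα0.ne' hpos.ne', Real.logb, Real.log_exp, div_eq_mul_inv]

lemma key_log2 {α : ℝ} (hα0 : 0 < α) (hα1 : α < 1) (A B : ℝ) :
    Real.logb 2 (α * rexp A + (1 - α) * rexp B)
      = B * (Real.log 2)⁻¹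
        + (Real.logb 2 (1 - α) + Real.logb 2 (1 + (α / (1 - α)) * rexp (A - B))) := by
  have hc : (0:ℝ) < α / (1 - α) := div_pos hα0 (by linarith)
  have hpos : (0:ℝ) < 1 + (α / (1 - α)) * rexp (A - B) :=
    add_pos_of_pos_of_nonneg one_pos (mul_pos hc (exp_pos _)).le
  have h1 : α * rexp A + (1 - α) * rexp B
      = rexp B * ((1 - α) * (1 + (α / (1 - α)) * rexp (A - B))) := by
    rw [Real.exp_sub]
    have h1α : (1:ℝ) - α ≠ 0 := by linarith
    field_simp
    ring
  rw [h1, Real.logb_mul (exp_ne_zero _) (mul_pos (by linarith : (0:ℝ) < 1 - α) hpos).ne',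
    Real.logb_mul (by linarith : (1:ℝ) - α ≠ 0) hpos.ne', Real.logb, Real.log_exp,
    div_eq_mul_inv]

lemma integrable_logexp {c : ℝ} (hc : 0 < c) (p q : ℝ) :
    Integrable (fun t : ℝ => Real.logb 2 (1 + c * rexp (p * t + q))) (gaussianReal 0 1) := by
  have hcont : Continuous fun t : ℝ => Real.logb 2 (1 + c * rexp (p * t + q)) := by
    simp only [Real.logb]
    apply Continuous.div_const
    apply Continuous.log
    · fun_prop
    · intro t
      positivity
  have hβ : (0:ℝ) ≤ (Real.log 2)⁻¹ := by
    rw [inv_nonneg]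
    exact (Real.log_pos one_lt_two).le
  refine Integrable.mono'
    (g := fun t => (Real.logb 2 (1 + c) + |q| * (Real.log 2)⁻¹) + (|p| * (Real.log 2)⁻¹) * |t|)
    ((integrable_const _).add (integrable_abs_gaussian.const_mul _))
    hcont.aestronglyMeasurable
    (Filter.Eventually.of_forall fun t => ?_)
  set u := p * t + q with hu
  have h1 : (1:ℝ) ≤ 1 + c * rexp u := le_add_of_nonneg_right (by positivity)
  rw [Real.norm_eq_abs, abs_of_nonneg (Real.logb_nonneg one_lt_two h1)]
  have e1 : rexp u ≤ rexp |u| := Real.exp_le_exp.mpr (le_abs_self u)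
  have e2 : (1:ℝ) ≤ rexp |u| := by
    rw [← Real.exp_zero]
    exact Real.exp_le_exp.mpr (abs_nonneg u)
  have h2 : 1 + c * rexp u ≤ (1 + c) * rexp |u| := by nlinarith [hc.le, Real.exp_pos u]
  have h3 : Real.logb 2 (1 + c * rexp u) ≤ Real.logb 2 ((1 + c) * rexp |u|) :=
    Real.logb_le_logb_of_le one_lt_two (by positivity) h2
  have h4 : Real.logb 2 ((1 + c) * rexp |u|) = Real.logb 2 (1 + c) + |u| * (Real.log 2)⁻¹ := by
    rw [Real.logb_mul (by positivity) (exp_ne_zero _)]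
    simp only [Real.logb, Real.log_exp]
    ring
  have h5 : |u| ≤ |p| * |t| + |q| := by
    rw [hu]
    calc |p * t + q| ≤ |p * t| + |q| := abs_add_le _ _
      _ = |p| * |t| + |q| := by rw [abs_mul]
  have h6 : |u| * (Real.log 2)⁻¹ ≤ (|p| * |t| + |q|) * (Real.log 2)⁻¹ :=
    mul_le_mul_of_nonneg_right h5 hβ
  calc Real.logb 2 (1 + c * rexp u) ≤ Real.logb 2 (1 + c) + |u| * (Real.log 2)⁻¹ := by
        rw [← h4]; exact h3
    _ ≤ Real.logb 2 (1 + c) + (|p| * |t| + |q|) * (Real.log 2)⁻¹ := by linarith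
    _ = (Real.logb 2 (1 + c) + |q| * (Real.log 2)⁻¹) + (|p| * (Real.log 2)⁻¹) * |t| := by ring

lemma normSq_nonneg {n : ℕ} (v : Fin n → ℝ) : 0 ≤ normSq v :=
  Finset.sum_nonneg fun i _ => sq_nonneg _

lemma map_linform {n : ℕ} (b : Fin n → ℝ) :
    (stdGaussian n).map (fun z => ∑ i, b i * z i)
      = (gaussianReal 0 1).map (fun t => Real.sqrt (normSq b) * t) := by
  rw [map_linear n b, gaussianReal_map_const_mul (Real.sqrt (normSq b)), mul_zero]
  congr 1
  ext
  push_cast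
  rw [Real.sq_sqrt (normSq_nonneg b), show (∑ i : Fin n, b i ^ 2) = normSq b from rfl,
    Real.coe_toNNReal _ (normSq_nonneg b), mul_one]

lemma key_transfer {n : ℕ} (b : Fin n → ℝ) {c : ℝ} (hc : 0 < c) (q : ℝ) :
    Integrable (fun z : Fin n → ℝ =>
        Real.logb 2 (1 + c * rexp (2 * (∑ i, b i * z i) + q))) (stdGaussian n)
    ∧ (∫ z, Real.logb 2 (1 + c * rexp (2 * (∑ i, b i * z i) + q)) ∂(stdGaussian n))
      = ∫ t, Real.logb 2 (1 + c * rexp (2 * Real.sqrt (normSq b) * t + q))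
          ∂(gaussianReal 0 1) := by
  set s := Real.sqrt (normSq b) with hs
  set g : ℝ → ℝ := fun x => Real.logb 2 (1 + c * rexp (2 * x + q)) with hg
  have hgc : Continuous g := by
    rw [hg]
    simp only [Real.logb]
    apply Continuous.div_const
    apply Continuous.log
    · fun_prop
    · intro t
      positivity
  have hcomp : (fun t : ℝ => g (s * t))
      = fun t : ℝ => Real.logb 2 (1 + c * rexp (2 * s * t + q)) := by
    funext t
    rw [hg, mul_assoc]
  have hint : Integrable (fun t : ℝ => g (s * t)) (gaussianReal 0 1) := by
    rw [hcomp]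
    exact integrable_logexp hc (2 * s) q
  constructor
  · have h1 := (integrable_map_measure (μ := stdGaussian n)
      (f := fun z : Fin n → ℝ => ∑ i, b i * z i) (g := g)
      (hgc.aestronglyMeasurable (μ := (stdGaussian n).map fun z : Fin n → ℝ => ∑ i, b i * z i))
      (measurable_linform b).aemeasurable).mp
    have h2 := (integrable_map_measure (μ := gaussianReal 0 1)
      (f := fun t : ℝ => s * t) (g := g)
      (hgc.aestronglyMeasurable (μ := (gaussianReal 0 1).map fun t : ℝ => s * t))
      (measurable_const_mul s).aemeasurable).mpr
    exact h1 (by rw [map_linform b]; exact h2 hint)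
  · have h3 := integral_map (f := g) (measurable_linform b).aemeasurable
      (hgc.aestronglyMeasurable (μ := (stdGaussian n).map fun z : Fin n → ℝ => ∑ i, b i * z i))
    have h4 := integral_map (f := g) (measurable_const_mul s).aemeasurable
      (hgc.aestronglyMeasurable (μ := (gaussianReal 0 1).map fun t : ℝ => s * t))
    have h5 : (∫ z, Real.logb 2 (1 + c * rexp (2 * (∑ i, b i * z i) + q)) ∂(stdGaussian n))
        = ∫ y, g y ∂((stdGaussian n).map (fun z : Fin n → ℝ => ∑ i, b i * z i)) := h3.symm
    rw [h5, map_linform b, h4, hcomp]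


/-- The mutual information of the binary-input vector-output additive Gaussian channel
`y = X·a + z` (with `P(X = -1) = α`, `z` standard Gaussian on `ℝⁿ`, so that
`E[f(y)] = α·E[f(-a+z)] + (1-α)·E[f(a+z)]`) equals `I(α, ‖a‖²)`: the channel is
equivalent, in terms of mutual information, to a binary-input scalar Gaussian channel
with SNR `γ = ‖a‖²`, and the mutual information depends on `a` only through `‖a‖²`. -/
theorem stmt1 (n : ℕ) (hn : 1 ≤ n) (a : Fin n → ℝ) (α : ℝ) (hα : α ∈ Set.Ioo (0 : ℝ) 1) :
    -(α * ∫ z, Real.logb 2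
          (α * Real.exp (-(normSq ((-a + z) + a)) / 2)
            + (1 - α) * Real.exp (-(normSq ((-a + z) - a)) / 2)) ∂(stdGaussian n)
      + (1 - α) * ∫ z, Real.logb 2
          (α * Real.exp (-(normSq ((a + z) + a)) / 2)
            + (1 - α) * Real.exp (-(normSq ((a + z) - a)) / 2)) ∂(stdGaussian n))
      - ((n : ℝ) / 2) * Real.logb 2 (Real.exp 1)
    = Iscalar α (normSq a) := by
  obtain ⟨hα0, hα1⟩ := hα
  have hc₁ : (0:ℝ) < (1 - α) / α := div_pos (by linarith) hα0
  have hc₂ : (0:ℝ) < α / (1 - α) := div_pos hα0 (by linarith)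
  set β := (Real.log 2)⁻¹ with hβ
  have hfun1 : (fun z : Fin n → ℝ => Real.logb 2
        (α * Real.exp (-(normSq ((-a + z) + a)) / 2)
          + (1 - α) * Real.exp (-(normSq ((-a + z) - a)) / 2)))
      = fun z => normSq z * (-(β / 2))
          + (Real.logb 2 α
            + Real.logb 2 (1 + ((1 - α) / α)
                * rexp (2 * (∑ i, a i * z i) + -(2 * normSq a)))) := by
    funext z
    have e1 : (-a + z) + a = z := by abel
    have e2 : normSq ((-a + z) - a)
        = normSq z - 4 * (∑ i, a i * z i) + 4 * normSq a := by
      simp only [normSq, Pi.sub_apply, Pi.add_apply, Pi.neg_apply]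
      have h : ∀ i : Fin n, (-a i + z i - a i) ^ 2
          = z i ^ 2 - 4 * (a i * z i) + 4 * a i ^ 2 := fun i => by ring
      simp_rw [h]
      rw [Finset.sum_add_distrib, Finset.sum_sub_distrib, Finset.mul_sum, Finset.mul_sum]
    rw [e1, e2, key_log hα0 hα1,
      show -(normSq z - 4 * (∑ i, a i * z i) + 4 * normSq a) / 2 - -(normSq z) / 2
        = 2 * (∑ i, a i * z i) + -(2 * normSq a) from by ring]
    ring
  have hfun2 : (fun z : Fin n → ℝ => Real.logb 2
        (α * Real.exp (-(normSq ((a + z) + a)) / 2)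
          + (1 - α) * Real.exp (-(normSq ((a + z) - a)) / 2)))
      = fun z => normSq z * (-(β / 2))
          + (Real.logb 2 (1 - α)
            + Real.logb 2 (1 + (α / (1 - α))
                * rexp (2 * (∑ i, (-a) i * z i) + -(2 * normSq a)))) := by
    funext z
    have e1 : (a + z) - a = z := by abel
    have e2 : normSq ((a + z) + a)
        = normSq z - 4 * (∑ i, (-a) i * z i) + 4 * normSq a := by
      simp only [normSq, Pi.sub_apply, Pi.add_apply, Pi.neg_apply]
      have h : ∀ i : Fin n, (a i + z i + a i) ^ 2
          = z i ^ 2 - 4 * (-a i * z i) + 4 * a i ^ 2 := fun i => by ring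
      simp_rw [h]
      rw [Finset.sum_add_distrib, Finset.sum_sub_distrib, Finset.mul_sum, Finset.mul_sum]
    rw [e1, e2, key_log2 hα0 hα1,
      show -(normSq z - 4 * (∑ i, (-a) i * z i) + 4 * normSq a) / 2 - -(normSq z) / 2
        = 2 * (∑ i, (-a) i * z i) + -(2 * normSq a) from by ring]
    ring
  have ht1 := key_transfer a hc₁ (-(2 * normSq a))
  have ht2 := key_transfer (-a : Fin n → ℝ) hc₂ (-(2 * normSq a))
  have hneg : normSq (-a : Fin n → ℝ) = normSq a := by
    simp only [normSq, Pi.neg_apply, neg_sq]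
  rw [hneg] at ht2
  have hN : Integrable (fun z : Fin n → ℝ => normSq z * (-(β / 2))) (stdGaussian n) :=
    (integrable_normSq n).mul_const _
  have hI1 : (∫ z, Real.logb 2
          (α * Real.exp (-(normSq ((-a + z) + a)) / 2)
            + (1 - α) * Real.exp (-(normSq ((-a + z) - a)) / 2)) ∂(stdGaussian n))
      = (n : ℝ) * (-(β / 2)) + (Real.logb 2 α
          + ∫ t, Real.logb 2 (1 + ((1 - α) / α)
              * rexp (2 * Real.sqrt (normSq a) * t + -(2 * normSq a)))
            ∂(gaussianReal 0 1)) := by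
    have hadd1 : Integrable (fun z : Fin n → ℝ => Real.logb 2 α
        + Real.logb 2 (1 + ((1 - α) / α)
            * rexp (2 * (∑ i, a i * z i) + -(2 * normSq a)))) (stdGaussian n) :=
      (integrable_const _).add ht1.1
    rw [hfun1, integral_add hN hadd1, integral_mul_const,
      integral_normSq, integral_add (integrable_const _) ht1.1, integral_const,
      probReal_univ, one_smul, ht1.2]
  have hI2 : (∫ z, Real.logb 2
          (α * Real.exp (-(normSq ((a + z) + a)) / 2)
            + (1 - α) * Real.exp (-(normSq ((a + z) - a)) / 2)) ∂(stdGaussian n))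
      = (n : ℝ) * (-(β / 2)) + (Real.logb 2 (1 - α)
          + ∫ t, Real.logb 2 (1 + (α / (1 - α))
              * rexp (2 * Real.sqrt (normSq a) * t + -(2 * normSq a)))
            ∂(gaussianReal 0 1)) := by
    have hadd2 : Integrable (fun z : Fin n → ℝ => Real.logb 2 (1 - α)
        + Real.logb 2 (1 + (α / (1 - α))
            * rexp (2 * (∑ i, (-a) i * z i) + -(2 * normSq a)))) (stdGaussian n) :=
      (integrable_const _).add ht2.1
    rw [hfun2, integral_add hN hadd2, integral_mul_const,
      integral_normSq, integral_add (integrable_const _) ht2.1, integral_const,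
      probReal_univ, one_smul, ht2.2]
  rw [hI1, hI2, Iscalar, binEnt,
    show Real.logb 2 (Real.exp 1) = β from by
      rw [Real.logb, Real.log_exp]; exact one_div _,
    show (fun z : ℝ => Real.logb 2 (1 + ((1 - α) / α)
          * Real.exp (2 * Real.sqrt (normSq a) * z - 2 * normSq a)))
      = fun t : ℝ => Real.logb 2 (1 + ((1 - α) / α)
          * rexp (2 * Real.sqrt (normSq a) * t + -(2 * normSq a))) from
      funext fun t => by rw [sub_eq_add_neg (2 * Real.sqrt (normSq a) * t)],
    show (fun z : ℝ => Real.logb 2 (1 + (α / (1 - α))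
          * Real.exp (2 * Real.sqrt (normSq a) * z - 2 * normSq a)))
      = fun t : ℝ => Real.logb 2 (1 + (α / (1 - α))
          * rexp (2 * Real.sqrt (normSq a) * t + -(2 * normSq a))) from
      funext fun t => by rw [sub_eq_add_neg (2 * Real.sqrt (normSq a) * t)]]
  ring
end

section
/- For every α ∈ (0,1) and every S > 0, the first-order approximation is an upper bound and the second-order approximation is a lower bound: (S·α − (1/2)·(e^{2S} − 1)·α²)·log₂(e) ≤ Ĩ(α,S) ≤ S·α·log₂(e). -/
open MeasureTheory ProbabilityTheory Real Filter Asymptotics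

/-- `Ĩ(α, S)`: the mutual information of the binary-input additive Gaussian channel with
additive SNR `S`, a priori probabilities `α, 1-α`, and `W ~ N(0, 2S)`:
`Ĩ(α,S) = H_b(α) − α·E[log₂(1 + ((1-α)/α)·e^{W−S})] − (1-α)·E[log₂(1 + (α/(1-α))·e^{W−S})]`. -/
noncomputable def Itilde (α S : ℝ) : ℝ :=
  binEnt α
    - α * ∫ w, Real.logb 2 (1 + ((1 - α) / α) * Real.exp (w - S))
        ∂(gaussianReal 0 (2 * S).toNNReal)
    - (1 - α) * ∫ w, Real.logb 2 (1 + (α / (1 - α)) * Real.exp (w - S))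
        ∂(gaussianReal 0 (2 * S).toNNReal)

open scoped NNReal ENNReal

section Aux
section GaussAux

variable {S : ℝ}

private lemma gauss_integral_eq (hS : 0 < S) (g : ℝ → ℝ) :
    ∫ x, g x ∂(gaussianReal 0 (2*S).toNNReal)
      = ∫ x, gaussianPDFReal 0 (2*S).toNNReal x * g x := by
  have hv : (2*S).toNNReal ≠ 0 := by
    simp [Real.toNNReal_eq_zero]; linarith
  rw [gaussianReal_of_var_ne_zero 0 hv]
  have h1 : gaussianPDF 0 (2*S).toNNReal
      = fun x => ((Real.toNNReal (gaussianPDFReal 0 (2*S).toNNReal x) : ℝ≥0) : ℝ≥0∞) := rfl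
  rw [h1, integral_withDensity_eq_integral_smul
    ((measurable_gaussianPDFReal 0 (2*S).toNNReal).real_toNNReal)]
  congr 1; funext x
  simp [NNReal.smul_def, Real.coe_toNNReal _ (gaussianPDFReal_nonneg _ _ x)]

private lemma gauss_integrable_iff (hS : 0 < S) {g : ℝ → ℝ} :
    Integrable g (gaussianReal 0 (2*S).toNNReal)
      ↔ Integrable (fun x => gaussianPDFReal 0 (2*S).toNNReal x * g x) := by
  have hv : (2*S).toNNReal ≠ 0 := by
    simp [Real.toNNReal_eq_zero]; linarith
  rw [gaussianReal_of_var_ne_zero 0 hv]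
  have h1 : gaussianPDF 0 (2*S).toNNReal
      = fun x => ((Real.toNNReal (gaussianPDFReal 0 (2*S).toNNReal x) : ℝ≥0) : ℝ≥0∞) := rfl
  rw [h1, integrable_withDensity_iff_integrable_smul
    ((measurable_gaussianPDFReal 0 (2*S).toNNReal).real_toNNReal)]
  constructor <;> intro h <;> refine h.congr (Filter.Eventually.of_forall fun x => ?_) <;>
    simp [NNReal.smul_def, Real.coe_toNNReal _ (gaussianPDFReal_nonneg _ _ x)]

private lemma gauss_pdf_shift (hS : 0 < S) (c x : ℝ) :
    gaussianPDFReal 0 (2*S).toNNReal (x - 2*c*S)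
      = Real.exp (c*x - c^2*S) * gaussianPDFReal 0 (2*S).toNNReal x := by
  have h2S : (((2*S).toNNReal : ℝ≥0) : ℝ) = 2*S := Real.coe_toNNReal _ (by linarith)
  simp only [gaussianPDFReal, sub_zero, h2S]
  rw [show Real.exp (c*x - c^2*S) * ((Real.sqrt (2*π*(2*S)))⁻¹ * Real.exp (-x^2/(2*(2*S))))
      = (Real.sqrt (2*π*(2*S)))⁻¹ * Real.exp (c*x - c^2*S + -x^2/(2*(2*S))) from by
    rw [Real.exp_add]; ring]
  congr 1
  field_simp
  ring

private lemma gauss_pdf_even (x : ℝ) :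
    gaussianPDFReal 0 (2*S).toNNReal (-x) = gaussianPDFReal 0 (2*S).toNNReal x := by
  simp [gaussianPDFReal, neg_sq]

private lemma gauss_tilt (hS : 0 < S) (c : ℝ) (f : ℝ → ℝ) :
    ∫ x, Real.exp (c*x) * f x ∂(gaussianReal 0 (2*S).toNNReal)
      = Real.exp (c^2*S) * ∫ x, f (x + 2*c*S) ∂(gaussianReal 0 (2*S).toNNReal) := by
  rw [gauss_integral_eq hS, gauss_integral_eq hS, ← integral_const_mul]
  calc ∫ x, gaussianPDFReal 0 (2*S).toNNReal x * (Real.exp (c*x) * f x)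
      = ∫ x, (fun y => Real.exp (c^2*S)
          * (gaussianPDFReal 0 (2*S).toNNReal (y - 2*c*S) * f y)) x := by
        congr 1; funext x
        simp only
        rw [gauss_pdf_shift hS]
        rw [show Real.exp (c*x - c^2*S) = Real.exp (c*x) * Real.exp (-(c^2*S)) from by
          rw [← Real.exp_add]; ring_nf]
        rw [Real.exp_neg]
        have := (Real.exp_pos (c^2*S)).ne'
        field_simp
    _ = ∫ x, (fun y => Real.exp (c^2*S)
          * (gaussianPDFReal 0 (2*S).toNNReal (y - 2*c*S) * f y)) (x + 2*c*S) :=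
        (integral_add_right_eq_self _ (2*c*S)).symm
    _ = ∫ x, Real.exp (c^2*S) * (gaussianPDFReal 0 (2*S).toNNReal x * f (x + 2*c*S)) := by
        simp only [add_sub_cancel_right]

private lemma gauss_symm (hS : 0 < S) (f : ℝ → ℝ) :
    ∫ x, f (-x) ∂(gaussianReal 0 (2*S).toNNReal)
      = ∫ x, f x ∂(gaussianReal 0 (2*S).toNNReal) := by
  rw [gauss_integral_eq hS, gauss_integral_eq hS]
  rw [← integral_neg_eq_self (fun x => gaussianPDFReal 0 (2*S).toNNReal x * f (-x)) volume]
  congr 1; funext x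
  rw [gauss_pdf_even, neg_neg]

private lemma gauss_int_exp (hS : 0 < S) (c : ℝ) :
    Integrable (fun x => Real.exp (c*x)) (gaussianReal 0 (2*S).toNNReal) := by
  rw [gauss_integrable_iff hS]
  have : (fun x => gaussianPDFReal 0 (2*S).toNNReal x * Real.exp (c*x))
      = fun x => Real.exp (c^2*S) * gaussianPDFReal 0 (2*S).toNNReal (x - 2*c*S) := by
    funext x
    rw [gauss_pdf_shift hS]
    rw [show c*x - c^2*S = c*x + -(c^2*S) from by ring, Real.exp_add]
    rw [Real.exp_neg]
    have := (Real.exp_pos (c^2*S)).ne'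
    field_simp
  rw [this]
  exact ((integrable_gaussianPDFReal 0 (2*S).toNNReal).comp_sub_right (2*c*S)).const_mul _

private lemma gauss_integrable_dom (hS : 0 < S) {g : ℝ → ℝ} (hm : Measurable g)
    (C1 C2 C3 C4 : ℝ)
    (hb : ∀ x, |g x| ≤ C1 + C2 * Real.exp x + C3 * Real.exp (2*x) + C4 * Real.exp (-x)) :
    Integrable g (gaussianReal 0 (2*S).toNNReal) := by
  have hint : Integrable (fun x => C1 + C2 * Real.exp x + C3 * Real.exp (2*x)
      + C4 * Real.exp (-x)) (gaussianReal 0 (2*S).toNNReal) := by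
    have e1 : Integrable (fun x => Real.exp x) (gaussianReal 0 (2*S).toNNReal) := by
      simpa using gauss_int_exp hS 1
    have e2 := gauss_int_exp hS 2
    have e3 : Integrable (fun x => Real.exp (-x)) (gaussianReal 0 (2*S).toNNReal) := by
      simpa using gauss_int_exp hS (-1)
    exact (((integrable_const C1).add (e1.const_mul C2)).add (e2.const_mul C3)).add
      (e3.const_mul C4)
  exact hint.mono' hm.aestronglyMeasurable (Filter.Eventually.of_forall hb)

private lemma gauss_int_id (hS : 0 < S) :
    Integrable (fun x : ℝ => x) (gaussianReal 0 (2*S).toNNReal) := by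
  apply gauss_integrable_dom hS measurable_id 0 1 0 1
  intro x
  rcases le_or_gt 0 x with h | h
  · have := Real.add_one_le_exp x
    have := Real.exp_pos (-x)
    simp only [id]; rw [abs_of_nonneg h]; nlinarith
  · have := Real.add_one_le_exp (-x)
    have := Real.exp_pos x
    simp only [id]; rw [abs_of_neg h]; nlinarith

private lemma gauss_exp_moment (hS : 0 < S) (c : ℝ) :
    ∫ x, Real.exp (c*x) ∂(gaussianReal 0 (2*S).toNNReal) = Real.exp (c^2*S) := by
  have h := gauss_tilt hS c (fun _ => (1:ℝ))
  simpa using h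

private lemma gauss_mean_zero (hS : 0 < S) :
    ∫ x, x ∂(gaussianReal 0 (2*S).toNNReal) = 0 := by
  have h := gauss_symm hS (fun x => x)
  rw [integral_neg] at h
  linarith

end GaussAux

private lemma mono_aux {f f' : ℝ → ℝ} (hf : ∀ u ∈ Set.Icc (0:ℝ) 1, HasDerivAt f (f' u) u)
    (h0 : ∀ u ∈ Set.Icc (0:ℝ) 1, 0 ≤ f' u) : MonotoneOn f (Set.Icc 0 1) := by
  apply monotoneOn_of_deriv_nonneg (convex_Icc 0 1)
  · exact fun u hu => (hf u hu).continuousAt.continuousWithinAt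
  · intro u hu; rw [interior_Icc] at hu
    exact ((hf u (Set.mem_Icc_of_Ioo hu)).differentiableAt).differentiableWithinAt
  · intro u hu; rw [interior_Icc] at hu
    rw [(hf u (Set.mem_Icc_of_Ioo hu)).deriv]
    exact h0 u (Set.mem_Icc_of_Ioo hu)

private lemma cubic_bound {x a : ℝ} (hx : -1 < x) (ha : a ∈ Set.Icc (0:ℝ) 1) :
    (1 + a*x) * Real.log (1 + a*x)
      ≤ a*x + (a^2/2 - a^3/6)*x^2 + a^3/6 * (x^2/(1+x)) := by
  have h1x : 0 < 1 + x := by linarith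
  have hpos : ∀ u ∈ Set.Icc (0:ℝ) 1, 0 < 1 + u*x := by
    intro u hu
    rcases le_or_gt 0 x with h | h
    · nlinarith [hu.1]
    · nlinarith [hu.2]
  set G : ℝ → ℝ := fun u => (u - u^2/2)*x^2 + u^2/2*(x^2/(1+x)) - x * Real.log (1+u*x)
    with hGdef
  set F : ℝ → ℝ := fun u => u*x + (u^2/2 - u^3/6)*x^2 + u^3/6 * (x^2/(1+x))
      - (1+u*x) * Real.log (1+u*x) with hFdef
  have hlin : ∀ u : ℝ, HasDerivAt (fun u : ℝ => 1 + u*x) x u := by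
    intro u
    simpa using ((hasDerivAt_id u).mul_const x).const_add 1
  have hlog : ∀ u ∈ Set.Icc (0:ℝ) 1,
      HasDerivAt (fun u : ℝ => Real.log (1+u*x)) (x/(1+u*x)) u := by
    intro u hu
    exact (hlin u).log (ne_of_gt (hpos u hu))
  have hG : ∀ u ∈ Set.Icc (0:ℝ) 1,
      HasDerivAt G ((1-u)*x^2 + u*(x^2/(1+x)) - x^2/(1+u*x)) u := by
    intro u hu
    have h1 : HasDerivAt (fun u : ℝ => (u - u^2/2)*x^2) ((1 - u)*x^2) u := by
      have := ((hasDerivAt_id u).sub ((hasDerivAt_pow 2 u).div_const 2)).mul_const (x^2)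
      exact this.congr_deriv (by ring)
    have h2 : HasDerivAt (fun u : ℝ => u^2/2*(x^2/(1+x))) (u*(x^2/(1+x))) u := by
      have := ((hasDerivAt_pow 2 u).div_const 2).mul_const (x^2/(1+x))
      exact this.congr_deriv (by ring)
    have h3 : HasDerivAt (fun u : ℝ => x * Real.log (1+u*x)) (x^2/(1+u*x)) u := by
      have := (hlog u hu).const_mul x
      exact this.congr_deriv (by rw [sq, mul_div_assoc])
    exact (h1.add h2).sub h3
  have hGnonneg : ∀ u ∈ Set.Icc (0:ℝ) 1, 0 ≤ G u := by
    have hmono : MonotoneOn G (Set.Icc 0 1) := by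
      apply mono_aux hG
      intro u hu
      have key : (1-u)*x^2 + u*(x^2/(1+x)) - x^2/(1+u*x)
          = u*(1-u)*x^4 / ((1+x)*(1+u*x)) := by
        field_simp [ne_of_gt h1x, ne_of_gt (hpos u hu)]
        ring
      rw [key]
      apply div_nonneg
      · exact mul_nonneg (mul_nonneg hu.1 (by linarith [hu.2])) (by positivity)
      · exact le_of_lt (mul_pos h1x (hpos u hu))
    intro u hu
    have h0 : G 0 = 0 := by simp [hGdef]
    have := hmono (Set.left_mem_Icc.mpr zero_le_one) hu hu.1
    rwa [h0] at this
  have hF : ∀ u ∈ Set.Icc (0:ℝ) 1, HasDerivAt F (G u) u := by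
    intro u hu
    have h1 : HasDerivAt (fun u : ℝ => u*x) x u := by
      simpa using (hasDerivAt_id u).mul_const x
    have h2 : HasDerivAt (fun u : ℝ => (u^2/2 - u^3/6)*x^2) ((u - u^2/2)*x^2) u := by
      have := (((hasDerivAt_pow 2 u).div_const 2).sub
        ((hasDerivAt_pow 3 u).div_const 6)).mul_const (x^2)
      exact this.congr_deriv (by ring)
    have h3 : HasDerivAt (fun u : ℝ => u^3/6 * (x^2/(1+x))) (u^2/2*(x^2/(1+x))) u := by
      have := ((hasDerivAt_pow 3 u).div_const 6).mul_const (x^2/(1+x))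
      exact this.congr_deriv (by ring)
    have h4 : HasDerivAt (fun u : ℝ => (1+u*x) * Real.log (1+u*x))
        (x * Real.log (1+u*x) + x) u := by
      have := (hlin u).mul ((hlin u).log (ne_of_gt (hpos u hu)))
      exact this.congr_deriv (by rw [mul_comm (1+u*x), div_mul_cancel₀ x (ne_of_gt (hpos u hu))])
    have := ((h1.add h2).add h3).sub h4
    exact this.congr_deriv (by simp only [hGdef]; ring)
  have hFmono : MonotoneOn F (Set.Icc 0 1) := mono_aux hF hGnonneg
  have hF0 : F 0 = 0 := by simp [hFdef]
  have := hFmono (Set.left_mem_Icc.mpr zero_le_one) ha ha.1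
  rw [hF0] at this
  simp only [hFdef] at this
  linarith

private lemma pt_low {z : ℝ} (hz : 0 < z) : z - 1 ≤ z * Real.log z := by
  have h := Real.log_le_sub_one_of_pos (inv_pos.mpr hz)
  rw [Real.log_inv] at h
  have h1 : 1 - z⁻¹ ≤ Real.log z := by linarith
  have h2 := mul_le_mul_of_nonneg_left h1 hz.le
  rw [mul_sub, mul_inv_cancel₀ hz.ne'] at h2
  linarith

private lemma pt_upper {α : ℝ} (hα0 : 0 < α) (hα1 : α < 1) (t : ℝ) :
    ((1-α) + α * Real.exp t) * Real.log ((1-α) + α * Real.exp t)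
      ≤ α*(Real.exp t - 1) + (α^2/2 - α^3/6)*(Real.exp t - 1)^2
        + α^3/6*(Real.exp t - 2 + Real.exp (-t)) := by
  have h := cubic_bound (x := Real.exp t - 1) (a := α)
    (by have := Real.exp_pos t; linarith) ⟨hα0.le, hα1.le⟩
  rw [show 1 + α*(Real.exp t - 1) = (1-α) + α * Real.exp t from by ring] at h
  rw [show (1:ℝ) + (Real.exp t - 1) = Real.exp t from by ring] at h
  have h2 : (Real.exp t - 1)^2/Real.exp t = Real.exp t - 2 + Real.exp (-t) := by
    rw [Real.exp_neg]
    field_simp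
    ring
  rw [h2] at h
  linarith

section IntAux

variable {S : ℝ}

private lemma abs_log_aff_le {a b : ℝ} (ha : 0 < a) (hb : 0 < b) (t : ℝ) :
    |Real.log (a + b*Real.exp t)| ≤ (|Real.log a| + |a-1|) + b * Real.exp t := by
  have hz : 0 < a + b*Real.exp t := by positivity
  have hup := Real.log_le_sub_one_of_pos hz
  have hlo : Real.log a ≤ Real.log (a + b*Real.exp t) :=
    Real.log_le_log ha (by nlinarith [Real.exp_pos t])
  rw [abs_le]
  have hbe : 0 < b * Real.exp t := by positivity
  constructor
  · have h1 : -|Real.log a| ≤ Real.log a := neg_abs_le _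
    have h2 : (0:ℝ) ≤ |a-1| := abs_nonneg _
    linarith
  · have h2 : a - 1 ≤ |a-1| := le_abs_self _
    have h3 : (0:ℝ) ≤ |Real.log a| := abs_nonneg _
    linarith

private lemma int_log_aff {a b : ℝ} (ha : 0 < a) (hb : 0 < b) (hS : 0 < S) :
    Integrable (fun w => Real.log (a + b*Real.exp (w-S))) (gaussianReal 0 (2*S).toNNReal) := by
  have hm : Measurable fun w : ℝ => Real.log (a + b*Real.exp (w-S)) :=
    ((((measurable_id.sub measurable_const).exp).const_mul b).const_add a).log
  apply gauss_integrable_dom hS hm (|Real.log a| + |a-1|) (b*Real.exp (-S)) 0 0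
  intro w
  have he : Real.exp (w-S) = Real.exp (-S) * Real.exp w := by rw [← Real.exp_add]; ring_nf
  calc |Real.log (a + b*Real.exp (w-S))|
      ≤ (|Real.log a| + |a-1|) + b * Real.exp (w-S) := abs_log_aff_le ha hb (w-S)
    _ = (|Real.log a| + |a-1|) + b*Real.exp (-S) * Real.exp w + 0 * Real.exp (2*w)
        + 0 * Real.exp (-w) := by rw [he]; ring

private lemma int_log_aff_rev {a b : ℝ} (ha : 0 < a) (hb : 0 < b) (hS : 0 < S) :
    Integrable (fun w => Real.log (a + b*Real.exp (S-w))) (gaussianReal 0 (2*S).toNNReal) := by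
  have hm : Measurable fun w : ℝ => Real.log (a + b*Real.exp (S-w)) :=
    ((((measurable_const.sub measurable_id).exp).const_mul b).const_add a).log
  apply gauss_integrable_dom hS hm (|Real.log a| + |a-1|) 0 0 (b*Real.exp S)
  intro w
  have he : Real.exp (S-w) = Real.exp S * Real.exp (-w) := by rw [← Real.exp_add]; ring_nf
  calc |Real.log (a + b*Real.exp (S-w))|
      ≤ (|Real.log a| + |a-1|) + b * Real.exp (S-w) := abs_log_aff_le ha hb (S-w)
    _ = (|Real.log a| + |a-1|) + 0 * Real.exp w + 0 * Real.exp (2*w)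
        + b*Real.exp S * Real.exp (-w) := by rw [he]; ring

private lemma int_exp_log_aff {a b : ℝ} (ha : 0 < a) (hb : 0 < b) (hS : 0 < S) :
    Integrable (fun w => Real.exp w * Real.log (a + b*Real.exp (w-S)))
      (gaussianReal 0 (2*S).toNNReal) := by
  have hm : Measurable fun w : ℝ => Real.exp w * Real.log (a + b*Real.exp (w-S)) :=
    measurable_id.exp.mul ((((measurable_id.sub measurable_const).exp).const_mul b).const_add a).log
  apply gauss_integrable_dom hS hm 0 (|Real.log a| + |a-1|) (b*Real.exp (-S)) 0
  intro w
  have he : Real.exp (w-S) = Real.exp (-S) * Real.exp w := by rw [← Real.exp_add]; ring_nf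
  have he2 : Real.exp (2*w) = Real.exp w * Real.exp w := by rw [← Real.exp_add]; ring_nf
  calc |Real.exp w * Real.log (a + b*Real.exp (w-S))|
      = Real.exp w * |Real.log (a + b*Real.exp (w-S))| := by rw [abs_mul, Real.abs_exp]
    _ ≤ Real.exp w * ((|Real.log a| + |a-1|) + b * Real.exp (w-S)) :=
        mul_le_mul_of_nonneg_left (abs_log_aff_le ha hb (w-S)) (Real.exp_pos w).le
    _ = 0 + (|Real.log a| + |a-1|) * Real.exp w + b*Real.exp (-S) * Real.exp (2*w)
        + 0 * Real.exp (-w) := by rw [he, he2]; ring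

end IntAux

end Aux

/-- The first-order approximation `S·α·log₂ e` is an upper bound and the second-order
approximation `(S·α − (1/2)(e^{2S} − 1)α²)·log₂ e` is a lower bound to `Ĩ(α,S)`. -/
theorem stmt12 (α S : ℝ) (hα : α ∈ Set.Ioo (0 : ℝ) 1) (hS : 0 < S) :
    (S * α - (1 / 2) * (Real.exp (2 * S) - 1) * α ^ 2) * Real.logb 2 (Real.exp 1)
      ≤ Itilde α S
    ∧ Itilde α S ≤ S * α * Real.logb 2 (Real.exp 1) := by
  obtain ⟨hα0, hα1⟩ := hα
  have h1α : 0 < 1 - α := by linarith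
  have hl2 : 0 < Real.log 2 := Real.log_pos (by norm_num)
  have hee : ∀ w : ℝ, Real.exp (w-S) = Real.exp (-S) * Real.exp w :=
    fun w => by rw [← Real.exp_add]; ring_nf
  have hσpos : ∀ w : ℝ, 0 < (1-α) + α * Real.exp (w-S) :=
    fun w => by nlinarith [Real.exp_pos (w-S)]
  have hρpos : ∀ w : ℝ, 0 < α + (1-α) * Real.exp (w-S) :=
    fun w => by nlinarith [Real.exp_pos (w-S)]
  have Ilogσ := int_log_aff h1α hα0 hS
  have Ilogρ := int_log_aff hα0 h1α hS
  have Iexplogσ := int_exp_log_aff h1α hα0 hS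
  have Irevσ := int_log_aff_rev h1α hα0 hS
  have e1 : Integrable (fun x => Real.exp x) (gaussianReal 0 (2*S).toNNReal) := by
    simpa using gauss_int_exp hS 1
  have e2 : Integrable (fun x => Real.exp (2*x)) (gaussianReal 0 (2*S).toNNReal) :=
    gauss_int_exp hS 2
  have em1 : Integrable (fun x => Real.exp (-x)) (gaussianReal 0 (2*S).toNNReal) := by
    simpa using gauss_int_exp hS (-1)
  have m1 : ∫ x, Real.exp x ∂(gaussianReal 0 (2*S).toNNReal) = Real.exp S := by
    have := gauss_exp_moment hS 1
    simpa using this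
  have m2 : ∫ x, Real.exp (2*x) ∂(gaussianReal 0 (2*S).toNNReal) = Real.exp (4*S) := by
    have := gauss_exp_moment hS 2
    rw [show ((2:ℝ))^2*S = 4*S from by ring] at this
    exact this
  have mm1 : ∫ x, Real.exp (-x) ∂(gaussianReal 0 (2*S).toNNReal) = Real.exp S := by
    have := gauss_exp_moment hS (-1)
    rw [show ((-1:ℝ))^2*S = S from by ring] at this
    simpa [neg_one_mul] using this
  -- the key decomposition of σ·log σ
  have hTpt : ∀ w : ℝ, ((1-α) + α*Real.exp (w-S)) * Real.log ((1-α) + α*Real.exp (w-S))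
      = (1-α) * Real.log ((1-α) + α*Real.exp (w-S))
        + (α*Real.exp (-S)) * (Real.exp w * Real.log ((1-α) + α*Real.exp (w-S))) := by
    intro w
    have he := hee w
    linear_combination (Real.log ((1-α) + α*Real.exp (w-S)) * α) * he
  have IT : Integrable (fun w => ((1-α) + α*Real.exp (w-S))
      * Real.log ((1-α) + α*Real.exp (w-S))) (gaussianReal 0 (2*S).toNNReal) := by
    have h := (Ilogσ.const_mul (1-α)).add (Iexplogσ.const_mul (α*Real.exp (-S)))
    exact h.congr (Filter.Eventually.of_forall fun w => (hTpt w).symm)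
  -- Claim A : ∫ log ρ = -S + e^{-S} * U
  have hA : ∫ w, Real.log (α + (1-α)*Real.exp (w-S)) ∂(gaussianReal 0 (2*S).toNNReal)
      = -S + Real.exp (-S) * ∫ w, Real.exp w * Real.log ((1-α) + α*Real.exp (w-S))
          ∂(gaussianReal 0 (2*S).toNNReal) := by
    have hpt : ∀ w : ℝ, Real.log (α + (1-α)*Real.exp (w-S))
        = (w - S) + Real.log ((1-α) + α*Real.exp (S-w)) := by
      intro w
      have h12 : Real.exp (w-S) * Real.exp (S-w) = 1 := by
        rw [← Real.exp_add]; simp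
      have hfac : α + (1-α)*Real.exp (w-S)
          = Real.exp (w-S) * ((1-α) + α*Real.exp (S-w)) := by
        linear_combination (-α) * h12
      rw [hfac, Real.log_mul (Real.exp_ne_zero _)
        (by nlinarith [Real.exp_pos (S-w)]), Real.log_exp]
    simp only [hpt]
    have hidS : Integrable (fun w : ℝ => w - S) (gaussianReal 0 (2*S).toNNReal) :=
      (gauss_int_id hS).sub (integrable_const S)
    rw [integral_add hidS Irevσ,
      integral_sub (gauss_int_id hS) (integrable_const S), gauss_mean_zero hS,
      integral_const]
    simp only [measure_univ, ENNReal.toReal_one, probReal_univ, smul_eq_mul, one_mul, zero_sub]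
    -- now need: ∫ log((1-α)+α e^{S-w}) = e^{-S} * U
    have hsym := gauss_symm hS (fun x => Real.log ((1-α) + α*Real.exp (S+x)))
    simp only [← sub_eq_add_neg] at hsym
    have htilt := gauss_tilt hS 1 (fun x => Real.log ((1-α) + α*Real.exp (x-S)))
    simp only [one_mul, mul_one, one_pow] at htilt
    have harg : ∀ x : ℝ, (x + 2*S) - S = S + x := fun x => by ring
    simp only [harg] at htilt
    rw [← hsym] at htilt
    -- htilt : ∫ exp x * logσ x = exp S * ∫ log((1-α)+α exp (S-x))
    have hexpS : Real.exp (-S) * Real.exp S = 1 := by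
      rw [← Real.exp_add]; simp
    rw [htilt, ← mul_assoc, hexpS, one_mul]
  -- Claim B : T = (1-α) Tσ + α e^{-S} U
  have hB : ∫ w, ((1-α) + α*Real.exp (w-S)) * Real.log ((1-α) + α*Real.exp (w-S))
        ∂(gaussianReal 0 (2*S).toNNReal)
      = (1-α) * (∫ w, Real.log ((1-α) + α*Real.exp (w-S)) ∂(gaussianReal 0 (2*S).toNNReal))
        + (α*Real.exp (-S)) * ∫ w, Real.exp w * Real.log ((1-α) + α*Real.exp (w-S))
            ∂(gaussianReal 0 (2*S).toNNReal) := by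
    simp only [hTpt]
    rw [integral_add (Ilogσ.const_mul (1-α)) (Iexplogσ.const_mul (α*Real.exp (-S))),
      integral_const_mul, integral_const_mul]
  -- Itilde in terms of T
  have hJ1 : ∫ w, Real.logb 2 (1 + ((1 - α) / α) * Real.exp (w - S))
        ∂(gaussianReal 0 (2*S).toNNReal)
      = ((∫ w, Real.log (α + (1-α)*Real.exp (w-S)) ∂(gaussianReal 0 (2*S).toNNReal))
          - Real.log α) / Real.log 2 := by
    have hpt1 : ∀ w : ℝ, Real.logb 2 (1 + ((1 - α) / α) * Real.exp (w - S))
        = (Real.log (α + (1-α)*Real.exp (w-S)) - Real.log α) / Real.log 2 := by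
      intro w
      rw [Real.logb, show (1:ℝ) + ((1 - α) / α) * Real.exp (w - S)
          = (α + (1-α)*Real.exp (w-S))/α from by field_simp,
        Real.log_div (hρpos w).ne' hα0.ne']
    simp only [hpt1]
    rw [integral_div, integral_sub Ilogρ (integrable_const _), integral_const]
    simp [measure_univ]
  have hJ2 : ∫ w, Real.logb 2 (1 + (α / (1 - α)) * Real.exp (w - S))
        ∂(gaussianReal 0 (2*S).toNNReal)
      = ((∫ w, Real.log ((1-α) + α*Real.exp (w-S)) ∂(gaussianReal 0 (2*S).toNNReal))
          - Real.log (1-α)) / Real.log 2 := by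
    have hpt2 : ∀ w : ℝ, Real.logb 2 (1 + (α / (1 - α)) * Real.exp (w - S))
        = (Real.log ((1-α) + α*Real.exp (w-S)) - Real.log (1-α)) / Real.log 2 := by
      intro w
      rw [Real.logb, show (1:ℝ) + (α / (1 - α)) * Real.exp (w - S)
          = ((1-α) + α*Real.exp (w-S))/(1-α) from by field_simp,
        Real.log_div (hσpos w).ne' h1α.ne']
    simp only [hpt2]
    rw [integral_div, integral_sub Ilogσ (integrable_const _), integral_const]
    simp [measure_univ]
  have hItilde : Itilde α S
      = (S*α - ∫ w, ((1-α) + α*Real.exp (w-S)) * Real.log ((1-α) + α*Real.exp (w-S))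
          ∂(gaussianReal 0 (2*S).toNNReal)) / Real.log 2 := by
    simp only [Itilde, binEnt]
    rw [hJ1, hJ2, hB, hA, Real.logb, Real.logb]
    field_simp
    ring
    -- lower bound for T
  have hσm1pt : ∀ w : ℝ, ((1-α) + α*Real.exp (w-S)) - 1
      = -α + (α*Real.exp (-S))*Real.exp w := fun w => by rw [hee w]; ring
  have Iσm1 : Integrable (fun w => ((1-α) + α*Real.exp (w-S)) - 1)
      (gaussianReal 0 (2*S).toNNReal) :=
    ((integrable_const (-α)).add (e1.const_mul (α*Real.exp (-S)))).congr
      (Filter.Eventually.of_forall fun w => (hσm1pt w).symm)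
  have x1 : Real.exp (-S) * Real.exp S = 1 := by rw [← Real.exp_add]; simp
  have hTlb : 0 ≤ ∫ w, ((1-α) + α*Real.exp (w-S)) * Real.log ((1-α) + α*Real.exp (w-S))
      ∂(gaussianReal 0 (2*S).toNNReal) := by
    have h1 : ∫ w, (((1-α) + α*Real.exp (w-S)) - 1) ∂(gaussianReal 0 (2*S).toNNReal) = 0 := by
      simp only [hσm1pt]
      rw [integral_add (integrable_const (-α)) (e1.const_mul (α*Real.exp (-S))),
        integral_const_mul, m1, integral_const]
      simp only [measure_univ, ENNReal.toReal_one, probReal_univ, one_smul, smul_eq_mul, one_mul]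
      linear_combination α * x1
    have h2 := integral_mono Iσm1 IT (fun w => pt_low (hσpos w))
    rw [h1] at h2; exact h2
  -- upper bound for T
  have hcan : ∀ w : ℝ,
      α*(Real.exp (w-S) - 1) + (α^2/2 - α^3/6)*(Real.exp (w-S) - 1)^2
        + α^3/6*(Real.exp (w-S) - 2 + Real.exp (S-w))
      = (-α + (α^2/2 - α^3/6) - 2*(α^3/6))
        + (Real.exp (-S) * (α - 2*(α^2/2 - α^3/6) + α^3/6)) * Real.exp w
        + (Real.exp (-S)^2 * (α^2/2 - α^3/6)) * Real.exp (2*w)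
        + (Real.exp S * (α^3/6)) * Real.exp (-w) := by
    intro w
    have h1 := hee w
    have h2 : Real.exp (S-w) = Real.exp S * Real.exp (-w) := by rw [← Real.exp_add]; ring_nf
    have h3 : Real.exp (2*w) = Real.exp w * Real.exp w := by rw [← Real.exp_add]; ring_nf
    rw [h1, h2, h3]; ring
  have Ican : Integrable (fun w =>
      (-α + (α^2/2 - α^3/6) - 2*(α^3/6))
        + (Real.exp (-S) * (α - 2*(α^2/2 - α^3/6) + α^3/6)) * Real.exp w
        + (Real.exp (-S)^2 * (α^2/2 - α^3/6)) * Real.exp (2*w)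
        + (Real.exp S * (α^3/6)) * Real.exp (-w)) (gaussianReal 0 (2*S).toNNReal) :=
    (((integrable_const _).add (e1.const_mul _)).add (e2.const_mul _)).add (em1.const_mul _)
  have IRHS0 : Integrable (fun w =>
      α*(Real.exp (w-S) - 1) + (α^2/2 - α^3/6)*(Real.exp (w-S) - 1)^2
        + α^3/6*(Real.exp (w-S) - 2 + Real.exp (S-w))) (gaussianReal 0 (2*S).toNNReal) :=
    Ican.congr (Filter.Eventually.of_forall fun w => (hcan w).symm)
  have hTub : (∫ w, ((1-α) + α*Real.exp (w-S)) * Real.log ((1-α) + α*Real.exp (w-S))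
        ∂(gaussianReal 0 (2*S).toNNReal))
      ≤ (1/2) * (Real.exp (2*S) - 1) * α^2 := by
    have hpw : ∀ w : ℝ, ((1-α) + α*Real.exp (w-S)) * Real.log ((1-α) + α*Real.exp (w-S))
        ≤ α*(Real.exp (w-S) - 1) + (α^2/2 - α^3/6)*(Real.exp (w-S) - 1)^2
          + α^3/6*(Real.exp (w-S) - 2 + Real.exp (S-w)) := by
      intro w
      have hp := pt_upper hα0 hα1 (w-S)
      rw [show -(w-S) = S-w from by ring] at hp
      exact hp
    have hmono := integral_mono IT IRHS0 hpw
    have hval : ∫ w, (α*(Real.exp (w-S) - 1) + (α^2/2 - α^3/6)*(Real.exp (w-S) - 1)^2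
          + α^3/6*(Real.exp (w-S) - 2 + Real.exp (S-w))) ∂(gaussianReal 0 (2*S).toNNReal)
        = (1/2) * (Real.exp (2*S) - 1) * α^2 := by
      simp only [hcan]
      have IcA : Integrable (fun w : ℝ => (-α + (α^2/2 - α^3/6) - 2*(α^3/6))
          + (Real.exp (-S) * (α - 2*(α^2/2 - α^3/6) + α^3/6)) * Real.exp w)
          (gaussianReal 0 (2*S).toNNReal) := (integrable_const _).add (e1.const_mul _)
      have IcB : Integrable (fun w : ℝ => ((-α + (α^2/2 - α^3/6) - 2*(α^3/6))
          + (Real.exp (-S) * (α - 2*(α^2/2 - α^3/6) + α^3/6)) * Real.exp w)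
          + (Real.exp (-S)^2 * (α^2/2 - α^3/6)) * Real.exp (2*w))
          (gaussianReal 0 (2*S).toNNReal) := IcA.add (e2.const_mul _)
      rw [integral_add IcB (em1.const_mul _),
        integral_add IcA (e2.const_mul _),
        integral_add (integrable_const _) (e1.const_mul _),
        integral_const_mul, integral_const_mul, integral_const_mul, m1, m2, mm1, integral_const]
      simp only [measure_univ, ENNReal.toReal_one, probReal_univ, one_smul, smul_eq_mul, one_mul]
      have x2 : Real.exp (-S)^2 * Real.exp (4*S) = Real.exp (2*S) := by
        rw [sq, ← Real.exp_add, ← Real.exp_add]; ring_nf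
      have x3 : Real.exp S * Real.exp S = Real.exp (2*S) := by
        rw [← Real.exp_add]; ring_nf
      linear_combination (α - 2*(α^2/2 - α^3/6) + α^3/6) * x1
        + (α^2/2 - α^3/6) * x2 + (α^3/6) * x3
    rw [hval] at hmono
    exact hmono
  -- conclude
  rw [show Real.logb 2 (Real.exp 1) = 1 / Real.log 2 from by rw [Real.logb, Real.log_exp],
    hItilde]
  constructor
  · rw [mul_one_div, div_le_div_iff₀ hl2 hl2]
    apply mul_le_mul_of_nonneg_right _ hl2.le
    nlinarith [hTub]
  · rw [mul_one_div, div_le_div_iff₀ hl2 hl2]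
    apply mul_le_mul_of_nonneg_right _ hl2.le
    nlinarith [hTlb]
end
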